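/- Let 1 < α < 2 and β > 0, let φ be an analytic self-map of the open unit disk D, and let g be analytic on D. Then the operator U_gC_φ, defined by (U_gC_φ f)(z) = ∫₀^z f(φ(ξ)) g'(ξ) dξ, is bounded from Z^α to Z^β if and only if g'' ∈ H_{v_β}^∞ and sup_{z∈D} (1−|z|²)^β |g'(z)φ'(z)| / (1−|φ(z)|²)^{α−1} < ∞. -/

import Mathlib

noncomputable section

/-- The open unit disk in the complex plane. -/
def uD : Set ℂ := Metric.ball 0 1

/-- The Zygmund-type quantity `(1-|z|^2)^a * |f''(z)|`. -/
def zygS (a : ℝ) (f : ℂ → ℂ) (z : ℂ) : ℝ := (1 - ‖z‖ ^ 2) ^ a * ‖deriv (deriv f) z‖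

/-- Membership in the Zygmund-type space `Z^a`. -/
def memZ (a : ℝ) (f : ℂ → ℂ) : Prop :=
  AnalyticOn ℂ f uD ∧ ∃ M : ℝ, ∀ z ∈ uD, zygS a f z ≤ M

/-- The Zygmund-type norm `‖f‖_{Z^a} = |f 0| + |f' 0| + sup_{z ∈ D} (1-|z|^2)^a |f''(z)|`. -/
def zNorm (a : ℝ) (f : ℂ → ℂ) : ℝ := ‖f 0‖ + ‖deriv f 0‖ + sSup (zygS a f '' uD)

/-- Membership in the weighted space `H^∞_{v_b}` (for `u` analytic on `uD`). -/
def memHv (b : ℝ) (u : ℂ → ℂ) : Prop :=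
  ∃ M : ℝ, ∀ z ∈ uD, (1 - ‖z‖ ^ 2) ^ b * ‖u z‖ ≤ M

/-- `T` is a bounded operator from `Z^a` to `Z^b`. -/
def boundedOp (a b : ℝ) (T : (ℂ → ℂ) → ℂ → ℂ) : Prop :=
  (∀ f, memZ a f → memZ b (T f)) ∧
    ∃ C > 0, ∀ f, memZ a f → zNorm b (T f) ≤ C * zNorm a f

/-- `(U_g C_φ f)(z) = ∫₀^z f(φ(ξ)) g'(ξ) dξ`, parametrized along the segment from `0` to `z`. -/
def UgCphi (g φ : ℂ → ℂ) (f : ℂ → ℂ) : ℂ → ℂ :=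
  fun z => ∫ t in (0:ℝ)..1, z * (f (φ ((t : ℂ) * z)) * deriv g ((t : ℂ) * z))


lemma uD_open : IsOpen uD := Metric.isOpen_ball

lemma mem_uD {z : ℂ} : z ∈ uD ↔ ‖z‖ < 1 := by
  simp [uD, Metric.mem_ball, dist_eq_norm]

lemma zero_uD : (0:ℂ) ∈ uD := by simp [mem_uD]

lemma smul_uD {z : ℂ} (hz : z ∈ uD) {t : ℝ} (ht0 : 0 ≤ t) (ht1 : t ≤ 1) :
    (t:ℂ) * z ∈ uD := by
  rw [mem_uD] at hz ⊢
  calc ‖(t:ℂ) * z‖ = t * ‖z‖ := by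
        rw [norm_mul, Complex.norm_real, Real.norm_of_nonneg ht0]
    _ ≤ 1 * ‖z‖ := by nlinarith [norm_nonneg z]
    _ < 1 := by simpa using hz

lemma mem_uD_of_le {z w : ℂ} (hz : z ∈ uD) (h : ‖w‖ ≤ ‖z‖) : w ∈ uD := by
  rw [mem_uD] at hz ⊢; linarith

/-- Derivative along the ray: `t ↦ u (t z)`. -/
lemma ray_hasDerivAt {u : ℂ → ℂ} (hu : DifferentiableOn ℂ u uD) {z : ℂ} (hz : z ∈ uD)
    {t : ℝ} (ht : t ∈ Set.Icc (0:ℝ) 1) :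
    HasDerivAt (fun s : ℝ => u ((s:ℂ) * z)) (z * deriv u ((t:ℂ) * z)) t := by
  have htz : (t:ℂ) * z ∈ uD := smul_uD hz ht.1 ht.2
  have hud : DifferentiableAt ℂ u ((t:ℂ) * z) :=
    (hu.differentiableAt (uD_open.mem_nhds htz))
  have h1 : HasDerivAt (fun s : ℝ => (s:ℂ) * z) z t := by
    simpa using (Complex.ofRealCLM.hasDerivAt (x := t)).mul_const z
  have := HasDerivAt.scomp t hud.hasDerivAt h1
  simpa [smul_eq_mul, Function.comp_def, mul_comm] using this

lemma contOn_ray {u : ℂ → ℂ} (hu : ContinuousOn u uD) {z : ℂ} (hz : z ∈ uD) :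
    ContinuousOn (fun t : ℝ => u ((t:ℂ) * z)) (Set.Icc 0 1) := by
  apply hu.comp (by fun_prop)
  intro t ht; exact smul_uD hz ht.1 ht.2

/-- FTC along the segment from `0` to `z`. -/
lemma segment_ftc {u : ℂ → ℂ} (hu : DifferentiableOn ℂ u uD) {z : ℂ} (hz : z ∈ uD) :
    u z - u 0 = ∫ t in (0:ℝ)..1, z * deriv u ((t:ℂ) * z) := by
  have hderiv : ContinuousOn (deriv u) uD := by
    have : AnalyticOnNhd ℂ u uD := hu.analyticOnNhd uD_open
    exact (this.deriv_of_isOpen uD_open).continuousOn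
  have hcont : ContinuousOn (fun t : ℝ => z * deriv u ((t:ℂ) * z)) (Set.Icc 0 1) :=
    (continuousOn_const.mul (contOn_ray hderiv hz))
  have := intervalIntegral.integral_eq_sub_of_hasDerivAt
    (f := fun s : ℝ => u ((s:ℂ) * z)) (f' := fun t => z * deriv u ((t:ℂ) * z))
    (fun t ht => ray_hasDerivAt hu hz (by rwa [Set.uIcc_of_le zero_le_one] at ht))
    (hcont.intervalIntegrable_of_Icc zero_le_one)
  rw [this]; norm_num

/-- The segment-parametrized primitive of `h`. -/
def primI (h : ℂ → ℂ) (z : ℂ) : ℂ := ∫ t in (0:ℝ)..1, z * h ((t:ℂ) * z)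

lemma primI_zero (h : ℂ → ℂ) : primI h 0 = 0 := by simp [primI]

lemma primI_hasDerivAt {h : ℂ → ℂ} (hh : DifferentiableOn ℂ h uD) {z : ℂ} (hz : z ∈ uD) :
    HasDerivAt (primI h) (h z) z := by
  have hzn : ‖z‖ < 1 := mem_uD.1 hz
  set ε : ℝ := (1 - ‖z‖) / 2 with hε
  have hε_pos : 0 < ε := by rw [hε]; linarith
  set r : ℝ := (1 + ‖z‖) / 2 with hr
  have hr1 : r < 1 := by rw [hr]; linarith
  have hr0 : 0 ≤ r := by positivity
  have hball : Metric.closedBall (0:ℂ) r ⊆ uD := by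
    intro w hw
    rw [mem_uD]
    have := Metric.mem_closedBall.1 hw
    rw [dist_zero_right] at this
    linarith
  have hmem : ∀ x ∈ Metric.ball z ε, ∀ t ∈ Set.Icc (0:ℝ) 1,
      (t:ℂ) * x ∈ Metric.closedBall (0:ℂ) r := by
    intro x hx t ht
    rw [Metric.mem_closedBall, dist_zero_right]
    have hxr : ‖x‖ ≤ r := by
      have h1 : ‖x - z‖ < ε := by
        have := Metric.mem_ball.1 hx; rwa [dist_eq_norm] at this
      have h2 : ‖x‖ ≤ ‖x - z‖ + ‖z‖ := by
        simpa using norm_add_le (x - z) z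
      rw [hr]; rw [hε] at h1; linarith
    calc ‖(t:ℂ) * x‖ = t * ‖x‖ := by
          rw [norm_mul, Complex.norm_real, Real.norm_of_nonneg ht.1]
      _ ≤ 1 * r := mul_le_mul ht.2 hxr (norm_nonneg x) zero_le_one
      _ = r := one_mul r
  have hanal : AnalyticOnNhd ℂ h uD := hh.analyticOnNhd uD_open
  have hhc : ContinuousOn h uD := hh.continuousOn
  have hdc : ContinuousOn (deriv h) uD := (hanal.deriv_of_isOpen uD_open).continuousOn
  obtain ⟨C₁, hC₁⟩ := (isCompact_closedBall (0:ℂ) r).exists_bound_of_continuousOn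
    (hhc.mono hball)
  obtain ⟨C₂, hC₂⟩ := (isCompact_closedBall (0:ℂ) r).exists_bound_of_continuousOn
    (hdc.mono hball)
  have key := intervalIntegral.hasDerivAt_integral_of_dominated_loc_of_deriv_le
    (F := fun x (t:ℝ) => x * h ((t:ℂ) * x))
    (F' := fun x (t:ℝ) => h ((t:ℂ) * x) + x * (deriv h ((t:ℂ) * x) * (t:ℂ)))
    (x₀ := z) (a := (0:ℝ)) (b := 1) (μ := MeasureTheory.volume)
    (bound := fun _ => C₁ + r * C₂) (Metric.ball_mem_nhds z hε_pos) ?_ ?_ ?_ ?_ ?_ ?_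
  · have heq : (∫ t in (0:ℝ)..1,
        (h ((t:ℂ) * z) + z * (deriv h ((t:ℂ) * z) * (t:ℂ)))) = h z := by
      have := intervalIntegral.integral_eq_sub_of_hasDerivAt
        (f := fun t : ℝ => (t:ℂ) * h ((t:ℂ) * z))
        (f' := fun t : ℝ => h ((t:ℂ) * z) + z * (deriv h ((t:ℂ) * z) * (t:ℂ))) (a := 0) (b := 1) ?_ ?_
      · rw [this]; norm_num
      · intro t ht
        rw [Set.uIcc_of_le zero_le_one] at ht
        have h1 : HasDerivAt (fun s : ℝ => (s:ℂ)) 1 t := by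
          simpa using (hasDerivAt_id t).ofReal_comp
        have h2 := ray_hasDerivAt hh hz ht
        have := h1.mul h2
        exact this.congr_deriv (by ring)
      · apply ContinuousOn.intervalIntegrable_of_Icc zero_le_one
        apply ContinuousOn.add
        · exact contOn_ray hhc hz
        · exact continuousOn_const.mul ((contOn_ray hdc hz).mul (by fun_prop))
    rw [← heq]
    exact key.2
  · -- hF_meas
    filter_upwards [Metric.ball_mem_nhds z hε_pos] with x hx
    apply ContinuousOn.aestronglyMeasurable ?_ measurableSet_uIoc
    apply ContinuousOn.mono (s := Set.Icc (0:ℝ) 1) ?_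
      (by rw [Set.uIoc_of_le (zero_le_one (α := ℝ))]; exact Set.Ioc_subset_Icc_self)
    exact continuousOn_const.mul (hhc.comp (by fun_prop)
      (fun t ht => hball (hmem x hx t ht)))
  · -- hF_int
    apply ContinuousOn.intervalIntegrable_of_Icc zero_le_one
    exact continuousOn_const.mul (contOn_ray hhc hz)
  · -- hF'_meas
    apply ContinuousOn.aestronglyMeasurable ?_ measurableSet_uIoc
    apply ContinuousOn.mono (s := Set.Icc (0:ℝ) 1) ?_
      (by rw [Set.uIoc_of_le (zero_le_one (α := ℝ))]; exact Set.Ioc_subset_Icc_self)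
    apply ContinuousOn.add (contOn_ray hhc hz)
    exact continuousOn_const.mul ((contOn_ray hdc hz).mul (by fun_prop))
  · -- h_bound
    apply MeasureTheory.ae_of_all
    intro t ht x hx
    have ht' : t ∈ Set.Icc (0:ℝ) 1 := by
      rw [Set.uIoc_of_le zero_le_one] at ht
      exact ⟨le_of_lt ht.1, ht.2⟩
    have htx := hmem x hx t ht'
    have hxr : ‖x‖ ≤ r := by
      have h1 : ‖x - z‖ < ε := by
        have := Metric.mem_ball.1 hx; rwa [dist_eq_norm] at this
      have h2 : ‖x‖ ≤ ‖x - z‖ + ‖z‖ := by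
        simpa using norm_add_le (x - z) z
      rw [hr]; rw [hε] at h1; linarith
    calc ‖h ((t:ℂ) * x) + x * (deriv h ((t:ℂ) * x) * (t:ℂ))‖
        ≤ ‖h ((t:ℂ) * x)‖ + ‖x * (deriv h ((t:ℂ) * x) * (t:ℂ))‖ := norm_add_le _ _
      _ ≤ C₁ + r * C₂ := by
          gcongr ?_ + ?_
          · exact hC₁ _ htx
          · rw [norm_mul, norm_mul, Complex.norm_real, Real.norm_of_nonneg ht'.1]
            have h3 := hC₂ _ htx
            have h4 : (0:ℝ) ≤ ‖deriv h ((t:ℂ) * x)‖ := norm_nonneg _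
            nlinarith [mul_le_mul hxr h3 h4 hr0,
              mul_nonneg (mul_nonneg (norm_nonneg x) h4) (by linarith [ht'.2] : (0:ℝ) ≤ 1 - t)]
  · -- bound_integrable
    exact intervalIntegrable_const
  · -- h_diff
    apply MeasureTheory.ae_of_all
    intro t ht x hx
    have ht' : t ∈ Set.Icc (0:ℝ) 1 := by
      rw [Set.uIoc_of_le zero_le_one] at ht
      exact ⟨le_of_lt ht.1, ht.2⟩
    have htx : (t:ℂ) * x ∈ uD := hball (hmem x hx t ht')
    have hdiff : DifferentiableAt ℂ h ((t:ℂ) * x) :=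
      hh.differentiableAt (uD_open.mem_nhds htx)
    have hinner : HasDerivAt (fun y : ℂ => (t:ℂ) * y) (t:ℂ) x := by
      simpa using (hasDerivAt_id x).const_mul (t:ℂ)
    have hcomp : HasDerivAt (fun y : ℂ => h ((t:ℂ) * y)) (deriv h ((t:ℂ) * x) * (t:ℂ)) x :=
      HasDerivAt.comp x hdiff.hasDerivAt hinner
    have := (hasDerivAt_id x).mul hcomp
    exact this.congr_deriv (by simp)

def UgCphi' (g φ : ℂ → ℂ) (f : ℂ → ℂ) : ℂ → ℂ :=
  fun z => ∫ t in (0:ℝ)..1, z * (f (φ ((t : ℂ) * z)) * deriv g ((t : ℂ) * z))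

section Tlemmas

variable {φ g : ℂ → ℂ} (hφ : DifferentiableOn ℂ φ uD) (hφm : Set.MapsTo φ uD uD)
  (hg : DifferentiableOn ℂ g uD)

include hg in
lemma derivg_diff : DifferentiableOn ℂ (deriv g) uD :=
  ((hg.analyticOnNhd uD_open).deriv_of_isOpen uD_open).differentiableOn

include hφ hφm hg in
lemma hsym_diff {f : ℂ → ℂ} (hf : DifferentiableOn ℂ f uD) :
    DifferentiableOn ℂ (fun ξ => f (φ ξ) * deriv g ξ) uD :=
  (hf.comp hφ hφm).mul (derivg_diff hg)

include hφ hφm hg in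
lemma T_hasDerivAt {f : ℂ → ℂ} (hf : DifferentiableOn ℂ f uD) {z : ℂ} (hz : z ∈ uD) :
    HasDerivAt (UgCphi' g φ f) (f (φ z) * deriv g z) z :=
  primI_hasDerivAt (hsym_diff hφ hφm hg hf) hz

include hφ hφm hg in
lemma T_deriv_eq {f : ℂ → ℂ} (hf : DifferentiableOn ℂ f uD) {z : ℂ} (hz : z ∈ uD) :
    deriv (UgCphi' g φ f) z = f (φ z) * deriv g z :=
  (T_hasDerivAt hφ hφm hg hf hz).deriv

include hφ hφm hg in
lemma T_diffOn {f : ℂ → ℂ} (hf : DifferentiableOn ℂ f uD) :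
    DifferentiableOn ℂ (UgCphi' g φ f) uD :=
  fun z hz => (T_hasDerivAt hφ hφm hg hf hz).differentiableAt.differentiableWithinAt

lemma T_zero (f : ℂ → ℂ) : UgCphi' g φ f 0 = 0 := by simp [UgCphi']

include hφ hφm hg in
lemma T_deriv2 {f : ℂ → ℂ} (hf : DifferentiableOn ℂ f uD) {z : ℂ} (hz : z ∈ uD) :
    deriv (deriv (UgCphi' g φ f)) z
      = deriv f (φ z) * deriv φ z * deriv g z + f (φ z) * deriv (deriv g) z := by
  have h1 : deriv (UgCphi' g φ f) =ᶠ[nhds z] (fun w => f (φ w) * deriv g w) := by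
    filter_upwards [uD_open.mem_nhds hz] with w hw
    exact T_deriv_eq hφ hφm hg hf hw
  rw [Filter.EventuallyEq.deriv_eq h1]
  have hφz : φ z ∈ uD := hφm hz
  have hfd : HasDerivAt f (deriv f (φ z)) (φ z) :=
    (hf.differentiableAt (uD_open.mem_nhds hφz)).hasDerivAt
  have hφd : HasDerivAt φ (deriv φ z) z :=
    (hφ.differentiableAt (uD_open.mem_nhds hz)).hasDerivAt
  have hgd : HasDerivAt (deriv g) (deriv (deriv g) z) z :=
    ((derivg_diff hg).differentiableAt (uD_open.mem_nhds hz)).hasDerivAt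
  have hcomp : HasDerivAt (fun w => f (φ w)) (deriv f (φ z) * deriv φ z) z :=
    HasDerivAt.comp z hfd hφd
  exact (hcomp.mul hgd).deriv

end Tlemmas

lemma int_aux {r p : ℝ} (hr0 : 0 ≤ r) (hr1 : r < 1) (hp : p ≠ 1) :
    ∫ t in (0:ℝ)..1, r * (1 - t*r) ^ (-p) = ((1-r) ^ (1-p) - 1) / (p-1) := by
  have hbase : ∀ t ∈ Set.Icc (0:ℝ) 1, 0 < 1 - t*r := by
    intro t ht
    nlinarith [ht.1, ht.2]
  have hG : ∀ t ∈ Set.uIcc (0:ℝ) 1,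
      HasDerivAt (fun s => (1 - s*r) ^ (1-p) / (p-1)) (r * (1 - t*r) ^ (-p)) t := by
    intro t ht
    rw [Set.uIcc_of_le zero_le_one] at ht
    have hin : HasDerivAt (fun s : ℝ => 1 - s*r) (-r) t := by
      simpa using ((hasDerivAt_id t).mul_const r).const_sub 1
    have hrp := (Real.hasDerivAt_rpow_const
      (x := 1 - t*r) (p := 1-p) (Or.inl (hbase t ht).ne')).comp t hin
    have h2 := hrp.div_const (p-1)
    refine h2.congr_deriv ?_
    have hpm : p - 1 ≠ 0 := sub_ne_zero.2 hp
    rw [show (1:ℝ)-p-1 = -p by ring]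
    field_simp
    ring
  have hint : IntervalIntegrable (fun t => r * (1 - t*r) ^ (-p))
      MeasureTheory.volume 0 1 := by
    apply ContinuousOn.intervalIntegrable_of_Icc zero_le_one
    apply ContinuousOn.mul continuousOn_const
    apply ContinuousOn.rpow_const (by fun_prop)
    intro t ht
    exact Or.inl (hbase t ht).ne'
  have := intervalIntegral.integral_eq_sub_of_hasDerivAt hG hint
  rw [this]
  norm_num
  ring

lemma norm_tz {t : ℝ} (ht : 0 ≤ t) (z : ℂ) : ‖(t:ℂ) * z‖ = t * ‖z‖ := by
  rw [norm_mul, Complex.norm_real, Real.norm_of_nonneg ht]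

lemma second_deriv_ptbound {α : ℝ} (hα0 : 0 < α) {u : ℂ → ℂ} {S : ℝ}
    (hS : ∀ z ∈ uD, (1 - ‖z‖ ^ 2) ^ α * ‖u z‖ ≤ S)
    {ζ : ℂ} (hζ : ζ ∈ uD) {t : ℝ} (ht0 : 0 ≤ t) (ht1 : t ≤ 1) :
    ‖u ((t:ℂ) * ζ)‖ ≤ S * (1 - t * ‖ζ‖) ^ (-α) := by
  set r := ‖ζ‖ with hrdef
  have hr0 : 0 ≤ r := norm_nonneg ζ
  have hr1 : r < 1 := mem_uD.1 hζ
  have hw : (t:ℂ) * ζ ∈ uD := smul_uD hζ ht0 ht1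
  have hwn : ‖(t:ℂ) * ζ‖ = t * r := norm_tz ht0 ζ
  have hpos : 0 < 1 - t * r := by nlinarith
  have hle : 1 - t * r ≤ 1 - ‖(t:ℂ) * ζ‖ ^ 2 := by
    rw [hwn]
    have h1 : 0 ≤ t * r := mul_nonneg ht0 hr0
    have h2 : t * r ≤ 1 := by nlinarith
    nlinarith
  have hA : (1 - t*r) ^ α ≤ (1 - ‖(t:ℂ) * ζ‖ ^ 2) ^ α :=
    Real.rpow_le_rpow hpos.le hle hα0.le
  have h2 : ‖u ((t:ℂ) * ζ)‖ * (1 - t*r) ^ α ≤ S := by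
    calc ‖u ((t:ℂ) * ζ)‖ * (1 - t*r) ^ α
        ≤ ‖u ((t:ℂ) * ζ)‖ * (1 - ‖(t:ℂ) * ζ‖ ^ 2) ^ α := by
          gcongr
      _ = (1 - ‖(t:ℂ) * ζ‖ ^ 2) ^ α * ‖u ((t:ℂ) * ζ)‖ := mul_comm _ _
      _ ≤ S := hS _ hw
  rw [Real.rpow_neg hpos.le, ← div_eq_mul_inv]
  rw [le_div_iff₀ (Real.rpow_pos_of_pos hpos α)]
  exact h2

lemma segment_norm_bound {α : ℝ} (hα1 : 1 < α) {u : ℂ → ℂ} {S : ℝ}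
    (hu : DifferentiableOn ℂ u uD)
    (hS : ∀ z ∈ uD, (1 - ‖z‖ ^ 2) ^ α * ‖deriv u z‖ ≤ S) (hS0 : 0 ≤ S)
    {ζ : ℂ} (hζ : ζ ∈ uD) :
    ‖u ζ - u 0‖ ≤ S * (((1 - ‖ζ‖) ^ (1-α) - 1) / (α-1)) := by
  set r := ‖ζ‖ with hrdef
  have hr0 : 0 ≤ r := norm_nonneg ζ
  have hr1 : r < 1 := mem_uD.1 hζ
  have hα0 : (0:ℝ) < α := by linarith
  rw [segment_ftc hu hζ]
  have hbint : IntervalIntegrable (fun t => S * (r * (1 - t*r) ^ (-α)))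
      MeasureTheory.volume 0 1 := by
    apply ContinuousOn.intervalIntegrable_of_Icc zero_le_one
    apply ContinuousOn.mul continuousOn_const
    apply ContinuousOn.mul continuousOn_const
    apply ContinuousOn.rpow_const (by fun_prop)
    intro t ht
    left
    nlinarith [ht.1, ht.2]
  have hb := intervalIntegral.norm_integral_le_abs_of_norm_le (μ := MeasureTheory.volume)
    (f := fun t : ℝ => ζ * deriv u ((t:ℂ) * ζ))
    (g := fun t => S * (r * (1 - t*r) ^ (-α))) ?_ hbint
  · have hval : (∫ t in (0:ℝ)..1, S * (r * (1 - t*r) ^ (-α)))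
        = S * (((1-r) ^ (1-α) - 1) / (α-1)) := by
      rw [intervalIntegral.integral_const_mul,
        int_aux hr0 hr1 (by linarith : α ≠ 1)]
    have h1A : (1:ℝ) ≤ (1-r) ^ (1-α) := by
      have := Real.rpow_le_rpow_of_nonpos (by linarith : (0:ℝ) < 1 - r)
        (by linarith : 1 - r ≤ 1) (by linarith : 1 - α ≤ 0)
      simpa using this
    have hnn : 0 ≤ S * (((1-r) ^ (1-α) - 1) / (α-1)) :=
      mul_nonneg hS0 (div_nonneg (by linarith) (by linarith))
    calc ‖∫ t in (0:ℝ)..1, ζ * deriv u ((t:ℂ) * ζ)‖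
        ≤ |∫ t in (0:ℝ)..1, S * (r * (1 - t*r) ^ (-α))| := hb
      _ = S * (((1 - r) ^ (1-α) - 1) / (α-1)) := by rw [hval, abs_of_nonneg hnn]
  · rw [MeasureTheory.ae_restrict_iff' measurableSet_uIoc]
    apply MeasureTheory.ae_of_all
    intro t ht
    rw [Set.uIoc_of_le zero_le_one] at ht
    have := second_deriv_ptbound (by linarith : (0:ℝ) < α) hS hζ ht.1.le ht.2
    rw [norm_mul]
    calc ‖ζ‖ * ‖deriv u ((t:ℂ) * ζ)‖ ≤ r * (S * (1 - t*r) ^ (-α)) := by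
          rw [hrdef]; gcongr
      _ = S * (r * (1 - t*r) ^ (-α)) := by ring

lemma deriv_growth {α : ℝ} (hα1 : 1 < α) {f : ℂ → ℂ} {S : ℝ} (hf : DifferentiableOn ℂ f uD)
    (hS : ∀ z ∈ uD, (1 - ‖z‖ ^ 2) ^ α * ‖deriv (deriv f) z‖ ≤ S) (hS0 : 0 ≤ S)
    {ζ : ℂ} (hζ : ζ ∈ uD) :
    ‖deriv f ζ‖ ≤ (‖deriv f 0‖ + S / (α-1)) * (1 - ‖ζ‖) ^ (1-α) := by
  set r := ‖ζ‖ with hrdef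
  have hr0 : 0 ≤ r := norm_nonneg ζ
  have hr1 : r < 1 := mem_uD.1 hζ
  have hsb := segment_norm_bound hα1 (derivg_diff hf) hS hS0 hζ
  have h1A : (1:ℝ) ≤ (1-r) ^ (1-α) := by
    have := Real.rpow_le_rpow_of_nonpos (by linarith : (0:ℝ) < 1 - r)
      (by linarith : 1 - r ≤ 1) (by linarith : 1 - α ≤ 0)
    simpa using this
  have htri : ‖deriv f ζ‖ ≤ ‖deriv f 0‖ + ‖deriv f ζ - deriv f 0‖ := by
    have := norm_add_le (deriv f 0) (deriv f ζ - deriv f 0)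
    simpa using this
  have hkey : S * (((1-r) ^ (1-α) - 1) / (α-1))
      = (S/(α-1)) * ((1-r) ^ (1-α) - 1) := by ring
  have hB : 0 ≤ S/(α-1) := div_nonneg hS0 (by linarith)
  have hf0 : 0 ≤ ‖deriv f 0‖ := norm_nonneg _
  rw [hkey] at hsb
  nlinarith [mul_le_mul_of_nonneg_left h1A hf0]

lemma value_growth {α : ℝ} (hα1 : 1 < α) (hα2 : α < 2) {f : ℂ → ℂ} {S : ℝ}
    (hf : DifferentiableOn ℂ f uD)
    (hS : ∀ z ∈ uD, (1 - ‖z‖ ^ 2) ^ α * ‖deriv (deriv f) z‖ ≤ S) (hS0 : 0 ≤ S)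
    {ζ : ℂ} (hζ : ζ ∈ uD) :
    ‖f ζ‖ ≤ ‖f 0‖ + (‖deriv f 0‖ + S / (α-1)) / (2-α) := by
  set K := ‖deriv f 0‖ + S / (α-1) with hKdef
  have hK0 : 0 ≤ K := by
    have : 0 ≤ S/(α-1) := div_nonneg hS0 (by linarith)
    positivity
  set r := ‖ζ‖ with hrdef
  have hr0 : 0 ≤ r := norm_nonneg ζ
  have hr1 : r < 1 := mem_uD.1 hζ
  have hftc := segment_ftc hf hζ
  have hbint : IntervalIntegrable (fun t => K * (r * (1 - t*r) ^ (-(α-1))))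
      MeasureTheory.volume 0 1 := by
    apply ContinuousOn.intervalIntegrable_of_Icc zero_le_one
    apply ContinuousOn.mul continuousOn_const
    apply ContinuousOn.mul continuousOn_const
    apply ContinuousOn.rpow_const (by fun_prop)
    intro t ht
    left
    nlinarith [ht.1, ht.2]
  have hb := intervalIntegral.norm_integral_le_abs_of_norm_le (μ := MeasureTheory.volume)
    (f := fun t : ℝ => ζ * deriv f ((t:ℂ) * ζ))
    (g := fun t => K * (r * (1 - t*r) ^ (-(α-1)))) ?_ hbint
  · have hval : (∫ t in (0:ℝ)..1, K * (r * (1 - t*r) ^ (-(α-1))))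
        = K * (((1-r) ^ (1-(α-1)) - 1) / ((α-1)-1)) := by
      rw [intervalIntegral.integral_const_mul,
        int_aux hr0 hr1 (by linarith : α - 1 ≠ 1)]
    have hle1 : (1-r) ^ (1-(α-1)) ≤ 1 :=
      Real.rpow_le_one (by linarith) (by linarith) (by linarith)
    have hpos : (0:ℝ) ≤ ((1-r) ^ (1-(α-1)) - 1) / ((α-1)-1) := by
      exact div_nonneg_of_nonpos (by linarith) (by linarith)
    have hnn : 0 ≤ K * (((1-r) ^ (1-(α-1)) - 1) / ((α-1)-1)) := mul_nonneg hK0 hpos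
    have hend : K * (((1-r) ^ (1-(α-1)) - 1) / ((α-1)-1)) ≤ K / (2-α) := by
      have h2α : (0:ℝ) < 2 - α := by linarith
      have h1 : ((1-r) ^ (1-(α-1)) - 1) / ((α-1)-1)
          = (1 - (1-r) ^ (1-(α-1))) / (2-α) := by
        rw [div_eq_div_iff (by linarith) (by linarith)]
        ring
      rw [h1]
      calc K * ((1 - (1-r) ^ (1-(α-1))) / (2-α)) ≤ K * (1 / (2-α)) :=
            mul_le_mul_of_nonneg_left ((div_le_div_iff_of_pos_right h2α).2 (by
              have : 0 ≤ (1-r) ^ (1-(α-1)) := Real.rpow_nonneg (by linarith) _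
              linarith)) hK0
        _ = K / (2-α) := by ring
    have htri : ‖f ζ‖ ≤ ‖f 0‖ + ‖f ζ - f 0‖ := by
      have := norm_add_le (f 0) (f ζ - f 0)
      simpa using this
    have hmid : ‖f ζ - f 0‖ ≤ K / (2-α) := by
      rw [hftc]
      calc ‖∫ t in (0:ℝ)..1, ζ * deriv f ((t:ℂ) * ζ)‖
          ≤ |∫ t in (0:ℝ)..1, K * (r * (1 - t*r) ^ (-(α-1)))| := hb
        _ = K * (((1-r) ^ (1-(α-1)) - 1) / ((α-1)-1)) := by rw [hval, abs_of_nonneg hnn]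
        _ ≤ K / (2-α) := hend
    linarith
  · rw [MeasureTheory.ae_restrict_iff' measurableSet_uIoc]
    apply MeasureTheory.ae_of_all
    intro t ht
    rw [Set.uIoc_of_le zero_le_one] at ht
    have hw : (t:ℂ) * ζ ∈ uD := smul_uD hζ ht.1.le ht.2
    have hdg := deriv_growth hα1 hf hS hS0 hw
    rw [norm_tz ht.1.le ζ] at hdg
    rw [norm_mul]
    have he : (1 - t*r) ^ (1-α) = (1 - t*r) ^ (-(α-1)) := by norm_num
    calc ‖ζ‖ * ‖deriv f ((t:ℂ) * ζ)‖ ≤ r * (K * (1 - t * r) ^ (1-α)) := by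
          rw [hrdef]; gcongr
      _ = K * (r * (1 - t*r) ^ (-(α-1))) := by rw [he]; ring

lemma UgCphi_eq (g φ f : ℂ → ℂ) : UgCphi g φ f = UgCphi' g φ f := rfl

lemma one_sub_sq_pos {z : ℂ} (hz : z ∈ uD) : 0 < 1 - ‖z‖ ^ 2 := by
  have h := mem_uD.1 hz
  nlinarith [norm_nonneg z]

lemma zygS_nonneg {a : ℝ} {f : ℂ → ℂ} {z : ℂ} (hz : z ∈ uD) : 0 ≤ zygS a f z :=
  mul_nonneg (Real.rpow_nonneg (one_sub_sq_pos hz).le a) (norm_nonneg _)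

lemma zyg_bddAbove {a : ℝ} {f : ℂ → ℂ} {M : ℝ} (hM : ∀ z ∈ uD, zygS a f z ≤ M) :
    BddAbove (zygS a f '' uD) := by
  refine ⟨M, ?_⟩
  rintro x ⟨z, hz, rfl⟩
  exact hM z hz

lemma zygS_le_sSup {a : ℝ} {f : ℂ → ℂ} (hm : memZ a f) {z : ℂ} (hz : z ∈ uD) :
    zygS a f z ≤ sSup (zygS a f '' uD) := by
  obtain ⟨M, hM⟩ := hm.2
  exact le_csSup (zyg_bddAbove hM) ⟨z, hz, rfl⟩

lemma sSup_zyg_nonneg {a : ℝ} {f : ℂ → ℂ} (hm : memZ a f) :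
    0 ≤ sSup (zygS a f '' uD) :=
  le_trans (zygS_nonneg zero_uD) (zygS_le_sSup hm zero_uD)

lemma le_zNorm₁ {a : ℝ} {f : ℂ → ℂ} (hm : memZ a f) : ‖f 0‖ ≤ zNorm a f := by
  have := sSup_zyg_nonneg hm
  unfold zNorm
  have := norm_nonneg (deriv f 0)
  linarith

lemma le_zNorm₂ {a : ℝ} {f : ℂ → ℂ} (hm : memZ a f) : ‖deriv f 0‖ ≤ zNorm a f := by
  have := sSup_zyg_nonneg hm
  unfold zNorm
  have := norm_nonneg (f 0)
  linarith

lemma le_zNorm₃ {a : ℝ} {f : ℂ → ℂ} (hm : memZ a f) :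
    sSup (zygS a f '' uD) ≤ zNorm a f := by
  unfold zNorm
  have h1 := norm_nonneg (f 0)
  have h2 := norm_nonneg (deriv f 0)
  linarith

lemma zNorm_nonneg {a : ℝ} {f : ℂ → ℂ} (hm : memZ a f) : 0 ≤ zNorm a f :=
  le_trans (norm_nonneg _) (le_zNorm₁ hm)

lemma zygS_le_zNorm {a : ℝ} {f : ℂ → ℂ} (hm : memZ a f) {z : ℂ} (hz : z ∈ uD) :
    zygS a f z ≤ zNorm a f :=
  le_trans (zygS_le_sSup hm hz) (le_zNorm₃ hm)

section Backward

variable {α β : ℝ} {φ g : ℂ → ℂ}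

/-- The product `(1-ρ)^(1-α) * (1-ρ²)^(α-1) ≤ 2` for `0 ≤ ρ < 1`, `1 < α ≤ 2`. -/
lemma prod_rpow_le_two {α ρ : ℝ} (hα1 : 1 < α) (hα2 : α ≤ 2) (hρ0 : 0 ≤ ρ) (hρ1 : ρ < 1) :
    (1 - ρ) ^ (1-α) * (1 - ρ^2) ^ (α-1) ≤ 2 := by
  have h1 : (0:ℝ) < 1 - ρ := by linarith
  have h2 : (0:ℝ) ≤ 1 + ρ := by linarith
  have hsq : 1 - ρ^2 = (1-ρ) * (1+ρ) := by ring
  rw [hsq, Real.mul_rpow h1.le h2, ← mul_assoc, ← Real.rpow_add h1]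
  norm_num
  calc (1+ρ) ^ (α-1) ≤ 2 ^ (α-1) :=
        Real.rpow_le_rpow h2 (by linarith) (by linarith)
    _ ≤ 2 ^ (1:ℝ) := Real.rpow_le_rpow_of_exponent_le one_le_two (by linarith)
    _ = 2 := Real.rpow_one 2

lemma backward (hα1 : 1 < α) (hα2 : α < 2) (hβ : 0 < β)
    (hφ : DifferentiableOn ℂ φ uD) (hφm : Set.MapsTo φ uD uD)
    (hg : DifferentiableOn ℂ g uD)
    {M₁ M₂ : ℝ} (hM₁0 : 0 ≤ M₁) (hM₂0 : 0 ≤ M₂)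
    (h1 : ∀ z ∈ uD, (1 - ‖z‖ ^ 2) ^ β * ‖deriv (deriv g) z‖ ≤ M₁)
    (h2 : ∀ z ∈ uD, (1 - ‖z‖ ^ 2) ^ β * ‖deriv g z * deriv φ z‖
        ≤ M₂ * (1 - ‖φ z‖ ^ 2) ^ (α-1)) :
    boundedOp α β (UgCphi g φ) := by
  have hα1' : (0:ℝ) < α - 1 := by linarith
  have hα2' : (0:ℝ) < 2 - α := by linarith
  set c₁ : ℝ := 1 + 1/(α-1) with hc₁
  set c₂ : ℝ := 1 + c₁/(2-α) with hc₂
  have hc₁0 : 0 ≤ c₁ := by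
    rw [hc₁]
    have : 0 ≤ 1/(α-1) := by positivity
    linarith
  have hc₂0 : 0 ≤ c₂ := by
    rw [hc₂]
    have : 0 ≤ c₁/(2-α) := div_nonneg hc₁0 hα2'.le
    linarith
  have main : ∀ f, memZ α f →
      (∀ z ∈ uD, zygS β (UgCphi g φ f) z ≤ (2*M₂*c₁ + M₁*c₂) * zNorm α f)
      ∧ ‖UgCphi g φ f 0‖ = 0
      ∧ ‖deriv (UgCphi g φ f) 0‖ ≤ ‖deriv g 0‖ * (c₂ * zNorm α f) := by
    intro f hf
    have hfd : DifferentiableOn ℂ f uD :=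
      ((uD_open.analyticOn_iff_analyticOnNhd).1 hf.1).differentiableOn
    set N := zNorm α f with hN
    have hN0 : 0 ≤ N := zNorm_nonneg hf
    set S := sSup (zygS α f '' uD) with hSdef
    have hS0 : 0 ≤ S := sSup_zyg_nonneg hf
    have hSN : S ≤ N := le_zNorm₃ hf
    have hSb : ∀ z ∈ uD, (1 - ‖z‖ ^ 2) ^ α * ‖deriv (deriv f) z‖ ≤ S :=
      fun z hz => zygS_le_sSup hf hz
    set K : ℝ := ‖deriv f 0‖ + S / (α-1) with hK
    have hK0 : 0 ≤ K := by
      rw [hK]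
      exact add_nonneg (norm_nonneg _) (div_nonneg hS0 hα1'.le)
    have hKc : K ≤ c₁ * N := by
      have ha : ‖deriv f 0‖ ≤ N := le_zNorm₂ hf
      have hb' : S/(α-1) ≤ N/(α-1) := by gcongr
      have : c₁ * N = N + N/(α-1) := by rw [hc₁]; ring
      rw [this, hK]
      linarith
    set V : ℝ := ‖f 0‖ + K/(2-α) with hV
    have hV0 : 0 ≤ V := by
      rw [hV]
      exact add_nonneg (norm_nonneg _) (div_nonneg hK0 hα2'.le)
    have hVc : V ≤ c₂ * N := by
      have ha : ‖f 0‖ ≤ N := le_zNorm₁ hf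
      have hb' : K/(2-α) ≤ (c₁*N)/(2-α) := by gcongr
      have : c₂ * N = N + (c₁*N)/(2-α) := by rw [hc₂]; ring
      rw [this, hV]
      linarith
    have hder : ∀ ζ ∈ uD, ‖deriv f ζ‖ ≤ K * (1 - ‖ζ‖) ^ (1-α) :=
      fun ζ hζ => deriv_growth hα1 hfd hSb hS0 hζ
    have hval : ∀ ζ ∈ uD, ‖f ζ‖ ≤ V :=
      fun ζ hζ => value_growth hα1 hα2 hfd hSb hS0 hζ
    refine ⟨?_, ?_, ?_⟩
    · intro z hz
      have hφz : φ z ∈ uD := hφm hz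
      have hρ0 : (0:ℝ) ≤ ‖φ z‖ := norm_nonneg _
      have hρ1 : ‖φ z‖ < 1 := mem_uD.1 hφz
      have hwpos : (0:ℝ) < (1 - ‖z‖ ^ 2) := one_sub_sq_pos hz
      have hwb : (0:ℝ) ≤ (1 - ‖z‖ ^ 2) ^ β := Real.rpow_nonneg hwpos.le β
      have hT2 := T_deriv2 hφ hφm hg hfd hz
      rw [UgCphi_eq g φ f]
      unfold zygS
      rw [hT2]
      have hstep : (1 - ‖z‖ ^ 2) ^ β *
          ‖deriv f (φ z) * deriv φ z * deriv g z + f (φ z) * deriv (deriv g) z‖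
          ≤ (1 - ‖z‖ ^ 2) ^ β * ‖deriv f (φ z) * deriv φ z * deriv g z‖
            + (1 - ‖z‖ ^ 2) ^ β * ‖f (φ z) * deriv (deriv g) z‖ := by
        rw [← mul_add]
        exact mul_le_mul_of_nonneg_left (norm_add_le _ _) hwb
      have htermA : (1 - ‖z‖ ^ 2) ^ β * ‖deriv f (φ z) * deriv φ z * deriv g z‖
          ≤ 2 * M₂ * (c₁ * N) := by
        have heq : (1 - ‖z‖ ^ 2) ^ β * ‖deriv f (φ z) * deriv φ z * deriv g z‖
            = ‖deriv f (φ z)‖ * ((1 - ‖z‖ ^ 2) ^ β * ‖deriv g z * deriv φ z‖) := by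
          rw [norm_mul, norm_mul, norm_mul]
          ring
        rw [heq]
        calc ‖deriv f (φ z)‖ * ((1 - ‖z‖ ^ 2) ^ β * ‖deriv g z * deriv φ z‖)
            ≤ (K * (1 - ‖φ z‖) ^ (1-α)) * (M₂ * (1 - ‖φ z‖ ^ 2) ^ (α-1)) := by
              apply mul_le_mul (hder _ hφz) (h2 z hz)
                (mul_nonneg hwb (norm_nonneg _))
                (mul_nonneg hK0 (Real.rpow_nonneg (by linarith) _))
          _ = (K * M₂) * ((1 - ‖φ z‖) ^ (1-α) * (1 - ‖φ z‖ ^ 2) ^ (α-1)) := by ring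
          _ ≤ (K * M₂) * 2 := by
              apply mul_le_mul_of_nonneg_left
                (prod_rpow_le_two hα1 hα2.le hρ0 hρ1) (mul_nonneg hK0 hM₂0)
          _ ≤ 2 * M₂ * (c₁ * N) := by nlinarith
      have htermB : (1 - ‖z‖ ^ 2) ^ β * ‖f (φ z) * deriv (deriv g) z‖
          ≤ M₁ * (c₂ * N) := by
        have heq : (1 - ‖z‖ ^ 2) ^ β * ‖f (φ z) * deriv (deriv g) z‖
            = ‖f (φ z)‖ * ((1 - ‖z‖ ^ 2) ^ β * ‖deriv (deriv g) z‖) := by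
          rw [norm_mul]
          ring
        rw [heq]
        calc ‖f (φ z)‖ * ((1 - ‖z‖ ^ 2) ^ β * ‖deriv (deriv g) z‖)
            ≤ V * M₁ := mul_le_mul (hval _ hφz) (h1 z hz)
              (mul_nonneg hwb (norm_nonneg _)) hV0
          _ ≤ M₁ * (c₂ * N) := by nlinarith
      calc (1 - ‖z‖ ^ 2) ^ β *
          ‖deriv f (φ z) * deriv φ z * deriv g z + f (φ z) * deriv (deriv g) z‖
          ≤ (1 - ‖z‖ ^ 2) ^ β * ‖deriv f (φ z) * deriv φ z * deriv g z‖
            + (1 - ‖z‖ ^ 2) ^ β * ‖f (φ z) * deriv (deriv g) z‖ := hstep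
        _ ≤ 2 * M₂ * (c₁ * N) + M₁ * (c₂ * N) := add_le_add htermA htermB
        _ = (2*M₂*c₁ + M₁*c₂) * N := by ring
    · rw [UgCphi_eq g φ f, T_zero]
      simp
    · rw [UgCphi_eq g φ f, T_deriv_eq hφ hφm hg hfd zero_uD, norm_mul]
      have := hval (φ 0) (hφm zero_uD)
      calc ‖f (φ 0)‖ * ‖deriv g 0‖ ≤ V * ‖deriv g 0‖ :=
            mul_le_mul_of_nonneg_right this (norm_nonneg _)
        _ ≤ ‖deriv g 0‖ * (c₂ * N) := by nlinarith [norm_nonneg (deriv g 0)]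
  constructor
  · intro f hf
    obtain ⟨hz, _, _⟩ := main f hf
    constructor
    · rw [UgCphi_eq g φ f]
      apply (uD_open.analyticOn_iff_analyticOnNhd).2
      have hfd : DifferentiableOn ℂ f uD :=
        ((uD_open.analyticOn_iff_analyticOnNhd).1 hf.1).differentiableOn
      exact (T_diffOn hφ hφm hg hfd).analyticOnNhd uD_open
    · exact ⟨(2*M₂*c₁ + M₁*c₂) * zNorm α f, hz⟩
  · refine ⟨‖deriv g 0‖ * c₂ + (2*M₂*c₁ + M₁*c₂) + 1, by positivity, ?_⟩
    intro f hf
    obtain ⟨hz, h0, hd0⟩ := main f hf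
    have hN0 : 0 ≤ zNorm α f := zNorm_nonneg hf
    have hsup : sSup (zygS β (UgCphi g φ f) '' uD) ≤ (2*M₂*c₁ + M₁*c₂) * zNorm α f := by
      apply Real.sSup_le
      · rintro x ⟨w, hw, rfl⟩
        exact hz w hw
      · positivity
    unfold zNorm
    rw [show ‖UgCphi g φ f 0‖ = 0 from h0]
    unfold zNorm at hd0 hsup hN0
    nlinarith [norm_nonneg (deriv g 0)]

end Backward

section TestFn

variable {α : ℝ}

/-- Test function `f_w(z) = (1 - conj w · z)^(2-α)`. -/
def testF (α : ℝ) (w : ℂ) : ℂ → ℂ :=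
  fun z => (1 - (starRingEnd ℂ) w * z) ^ ((2:ℂ) - (α:ℂ))

lemma base_norm_low {w z : ℂ} (hw : ‖w‖ ≤ 1) (hz : z ∈ uD) :
    0 < 1 - ‖w‖ * ‖z‖ ∧ 1 - ‖w‖ * ‖z‖ ≤ ‖1 - (starRingEnd ℂ) w * z‖ := by
  have hz1 : ‖z‖ < 1 := mem_uD.1 hz
  have hz0 : 0 ≤ ‖z‖ := norm_nonneg z
  have hw0 : 0 ≤ ‖w‖ := norm_nonneg w
  constructor
  · nlinarith
  · have h1 : ‖(starRingEnd ℂ) w * z‖ = ‖w‖ * ‖z‖ := by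
      rw [norm_mul, RCLike.norm_conj]
    have h2 : ‖(1:ℂ)‖ - ‖(starRingEnd ℂ) w * z‖ ≤ ‖1 - (starRingEnd ℂ) w * z‖ :=
      norm_sub_norm_le _ _
    rw [h1] at h2
    simpa using h2

lemma base_ne_zero {w z : ℂ} (hw : ‖w‖ ≤ 1) (hz : z ∈ uD) :
    1 - (starRingEnd ℂ) w * z ≠ 0 := by
  obtain ⟨h1, h2⟩ := base_norm_low hw hz
  intro h
  rw [h] at h2
  simp only [norm_zero] at h2
  linarith

lemma base_slit {w z : ℂ} (hw : ‖w‖ ≤ 1) (hz : z ∈ uD) :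
    1 - (starRingEnd ℂ) w * z ∈ Complex.slitPlane := by
  rw [Complex.mem_slitPlane_iff]
  left
  obtain ⟨h1, h2⟩ := base_norm_low hw hz
  have h3 : ((starRingEnd ℂ) w * z).re ≤ ‖(starRingEnd ℂ) w * z‖ := Complex.re_le_norm _
  have h4 : ‖(starRingEnd ℂ) w * z‖ = ‖w‖ * ‖z‖ := by
    rw [norm_mul, RCLike.norm_conj]
  have : (1 - (starRingEnd ℂ) w * z).re = 1 - ((starRingEnd ℂ) w * z).re := by
    simp
  rw [this]
  rw [h4] at h3
  linarith

lemma inner_hasDerivAt (w z : ℂ) :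
    HasDerivAt (fun z : ℂ => 1 - (starRingEnd ℂ) w * z) (-((starRingEnd ℂ) w)) z := by
  simpa using ((hasDerivAt_id z).const_mul ((starRingEnd ℂ) w)).const_sub 1

lemma testF_hasDerivAt {w z : ℂ} (hw : ‖w‖ ≤ 1) (hz : z ∈ uD) :
    HasDerivAt (testF α w)
      (((2:ℂ) - (α:ℂ)) * (1 - (starRingEnd ℂ) w * z) ^ ((1:ℂ) - (α:ℂ))
        * (-((starRingEnd ℂ) w))) z := by
  have := (inner_hasDerivAt w z).cpow_const (c := (2:ℂ) - (α:ℂ)) (base_slit hw hz)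
  have he : (2:ℂ) - (α:ℂ) - 1 = (1:ℂ) - (α:ℂ) := by ring
  rw [he] at this
  exact this

lemma testF_deriv2 {w z : ℂ} (hw : ‖w‖ ≤ 1) (hz : z ∈ uD) :
    deriv (deriv (testF α w)) z
      = ((2:ℂ) - (α:ℂ)) * (((1:ℂ) - (α:ℂ))) * ((starRingEnd ℂ) w)^2
        * (1 - (starRingEnd ℂ) w * z) ^ (-(α:ℂ)) := by
  have h1 : deriv (testF α w) =ᶠ[nhds z]
      (fun z' => (((2:ℂ) - (α:ℂ)) * (-((starRingEnd ℂ) w)))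
        * (1 - (starRingEnd ℂ) w * z') ^ ((1:ℂ) - (α:ℂ))) := by
    filter_upwards [uD_open.mem_nhds hz] with z' hz'
    rw [(testF_hasDerivAt hw hz').deriv]
    ring
  rw [h1.deriv_eq]
  have h2 := ((inner_hasDerivAt w z).cpow_const (c := (1:ℂ) - (α:ℂ))
    (base_slit hw hz)).const_mul (((2:ℂ) - (α:ℂ)) * (-((starRingEnd ℂ) w)))
  rw [h2.deriv]
  have he : (1:ℂ) - (α:ℂ) - 1 = -(α:ℂ) := by ring
  rw [he]
  ring

lemma norm_cpow_real {x : ℂ} (hx : x ≠ 0) (c : ℝ) : ‖x ^ (c:ℂ)‖ = ‖x‖ ^ c := by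
  rw [Complex.norm_cpow_of_ne_zero hx]
  simp

end TestFn

section TestFn2

variable {α : ℝ}

lemma testF_zygS_bound (hα1 : 1 < α) (hα2 : α < 2) {w z : ℂ} (hw : ‖w‖ ≤ 1) (hz : z ∈ uD) :
    zygS α (testF α w) z ≤ (2-α) * (α-1) * 2 ^ α := by
  obtain ⟨hpos, hlow⟩ := base_norm_low hw hz
  have hu0 : 1 - (starRingEnd ℂ) w * z ≠ 0 := base_ne_zero hw hz
  have hun : (0:ℝ) < ‖1 - (starRingEnd ℂ) w * z‖ := norm_pos_iff.mpr hu0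
  have hz1 : ‖z‖ < 1 := mem_uD.1 hz
  unfold zygS
  rw [testF_deriv2 hw hz]
  have hnorm : ‖((2:ℂ)-(α:ℂ)) * ((1:ℂ)-(α:ℂ)) * ((starRingEnd ℂ) w)^2
      * (1 - (starRingEnd ℂ) w * z) ^ (-(α:ℂ))‖
      = (2-α) * (α-1) * ‖w‖^2 * ‖1 - (starRingEnd ℂ) w * z‖ ^ (-α) := by
    rw [norm_mul, norm_mul, norm_mul, norm_pow]
    rw [show -(α:ℂ) = ((-α : ℝ) : ℂ) by push_cast; ring]
    rw [norm_cpow_real hu0]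
    rw [show ((2:ℂ)-(α:ℂ)) = (((2-α:ℝ)) : ℂ) by push_cast; ring,
      show ((1:ℂ)-(α:ℂ)) = (((1-α:ℝ)) : ℂ) by push_cast; ring]
    rw [Complex.norm_real, Complex.norm_real, RCLike.norm_conj]
    rw [Real.norm_of_nonneg (by linarith : (0:ℝ) ≤ 2-α), Real.norm_eq_abs (1-α),
      abs_of_nonpos (by linarith : (1:ℝ)-α ≤ 0)]
    ring
  rw [hnorm]
  have h2b : 1 - ‖z‖^2 ≤ 2 * ‖1 - (starRingEnd ℂ) w * z‖ := by
    nlinarith [sq_nonneg (1-‖z‖), mul_le_mul_of_nonneg_right hw (norm_nonneg z),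
      norm_nonneg z, norm_nonneg w]
  have hprod : (1-‖z‖^2)^α * ‖1 - (starRingEnd ℂ) w * z‖^(-α) ≤ 2^α := by
    rw [Real.rpow_neg hun.le, ← div_eq_mul_inv,
      div_le_iff₀ (Real.rpow_pos_of_pos hun α)]
    calc (1-‖z‖^2)^α ≤ (2*‖1 - (starRingEnd ℂ) w * z‖)^α :=
          Real.rpow_le_rpow (one_sub_sq_pos hz).le h2b (by linarith)
      _ = 2^α * ‖1 - (starRingEnd ℂ) w * z‖^α :=
          Real.mul_rpow (by norm_num) hun.le
  calc (1-‖z‖^2)^α * ((2-α)*(α-1)*‖w‖^2*‖1 - (starRingEnd ℂ) w * z‖^(-α))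
      = ((2-α)*(α-1)*‖w‖^2) * ((1-‖z‖^2)^α * ‖1 - (starRingEnd ℂ) w * z‖^(-α)) := by
        ring
    _ ≤ ((2-α)*(α-1)*1) * (2^α) := by
        apply mul_le_mul ?_ hprod
          (mul_nonneg (Real.rpow_nonneg (one_sub_sq_pos hz).le α)
            (Real.rpow_nonneg hun.le _)) (by nlinarith)
        have hw2 : ‖w‖^2 ≤ 1 := by nlinarith [norm_nonneg w]
        exact mul_le_mul_of_nonneg_left hw2 (by nlinarith)
    _ = (2-α)*(α-1)*2^α := by ring

lemma testF_memZ (hα1 : 1 < α) (hα2 : α < 2) {w : ℂ} (hw : ‖w‖ ≤ 1) :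
    memZ α (testF α w) := by
  constructor
  · apply (uD_open.analyticOn_iff_analyticOnNhd).2
    apply DifferentiableOn.analyticOnNhd ?_ uD_open
    intro z hz
    exact (testF_hasDerivAt hw hz).differentiableAt.differentiableWithinAt
  · exact ⟨(2-α) * (α-1) * 2 ^ α, fun z hz => testF_zygS_bound hα1 hα2 hw hz⟩

lemma testF_zero (w : ℂ) : testF α w 0 = 1 := by
  simp [testF]

lemma testF_deriv_zero_norm (hα2 : α < 2) {w : ℂ} (hw : ‖w‖ ≤ 1) :
    ‖deriv (testF α w) 0‖ ≤ 2-α := by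
  rw [(testF_hasDerivAt hw zero_uD).deriv]
  rw [mul_zero, sub_zero, Complex.one_cpow]
  rw [norm_mul, norm_mul, norm_neg, RCLike.norm_conj, norm_one, mul_one]
  rw [show ((2:ℂ)-(α:ℂ)) = (((2-α:ℝ)) : ℂ) by push_cast; ring, Complex.norm_real,
    Real.norm_of_nonneg (by linarith : (0:ℝ) ≤ 2-α)]
  nlinarith [norm_nonneg w]

lemma testF_zNorm_le (hα1 : 1 < α) (hα2 : α < 2) {w : ℂ} (hw : ‖w‖ ≤ 1) :
    zNorm α (testF α w) ≤ 1 + (2-α) + (2-α)*(α-1)*2^α := by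
  unfold zNorm
  have h1 : ‖testF α w 0‖ = 1 := by rw [testF_zero]; simp
  have h2 := testF_deriv_zero_norm hα2 hw
  have h3 : sSup (zygS α (testF α w) '' uD) ≤ (2-α)*(α-1)*2^α := by
    apply Real.sSup_le
    · rintro x ⟨z, hz, rfl⟩
      exact testF_zygS_bound hα1 hα2 hw hz
    · have h2α : (0:ℝ) < 2^α := Real.rpow_pos_of_pos (by norm_num) α
      have : (0:ℝ) ≤ (2-α)*(α-1) := by nlinarith
      exact mul_nonneg this h2α.le
  linarith

lemma conj_mul_self (w : ℂ) : 1 - (starRingEnd ℂ) w * w = (((1 - ‖w‖^2 : ℝ)) : ℂ) := by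
  rw [mul_comm, Complex.mul_conj]
  rw [Complex.normSq_eq_norm_sq]
  push_cast
  rfl

lemma testF_deriv_at_self (hα1 : 1 < α) (hα2 : α < 2) {w : ℂ} (hw : w ∈ uD) :
    ‖deriv (testF α w) w‖ = (2-α) * ((1-‖w‖^2) ^ (1-α)) * ‖w‖ := by
  have hw1 : ‖w‖ ≤ 1 := (mem_uD.1 hw).le
  have hpos : (0:ℝ) < 1 - ‖w‖^2 := one_sub_sq_pos hw
  rw [(testF_hasDerivAt hw1 hw).deriv]
  rw [conj_mul_self w]
  rw [norm_mul, norm_mul, norm_neg, RCLike.norm_conj]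
  rw [show ((1:ℂ)-(α:ℂ)) = (((1-α:ℝ)) : ℂ) by push_cast; ring]
  rw [show ((2:ℂ)-(α:ℂ)) = (((2-α:ℝ)) : ℂ) by push_cast; ring]
  rw [Complex.norm_real, Real.norm_of_nonneg (by linarith : (0:ℝ) ≤ 2-α)]
  rw [Complex.norm_cpow_eq_rpow_re_of_pos hpos]
  simp

lemma testF_at_self_norm (hα2 : α ≤ 2) {w : ℂ} (hw : w ∈ uD) :
    ‖testF α w w‖ ≤ 1 := by
  have hpos : (0:ℝ) < 1 - ‖w‖^2 := one_sub_sq_pos hw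
  unfold testF
  rw [conj_mul_self w]
  rw [show ((2:ℂ)-(α:ℂ)) = (((2-α:ℝ)) : ℂ) by push_cast; ring]
  rw [Complex.norm_cpow_eq_rpow_re_of_pos hpos]
  simp only [Complex.ofReal_re]
  apply Real.rpow_le_one hpos.le (by nlinarith [norm_nonneg w]) (by linarith)

end TestFn2

section Forward

variable {α β : ℝ} {φ g : ℂ → ℂ}

lemma forward (hα1 : 1 < α) (hα2 : α < 2) (hβ : 0 < β)
    (hφ : DifferentiableOn ℂ φ uD) (hφm : Set.MapsTo φ uD uD)
    (hg : DifferentiableOn ℂ g uD)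
    (hb : boundedOp α β (UgCphi g φ)) :
    memHv β (deriv (deriv g)) ∧ (∃ M : ℝ, ∀ z ∈ uD,
      (1 - ‖z‖ ^ 2) ^ β * ‖deriv g z * deriv φ z‖ / (1 - ‖φ z‖ ^ 2) ^ (α - 1) ≤ M) := by
  obtain ⟨hmem, C, hC0, hCb⟩ := hb
  have key : ∀ f, memZ α f → ∀ z ∈ uD, zygS β (UgCphi g φ f) z ≤ C * zNorm α f := by
    intro f hf z hz
    exact (zygS_le_sSup (hmem f hf) hz).trans ((le_zNorm₃ (hmem f hf)).trans (hCb f hf))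
  -- Step 1 : constant function 1
  have hf₁ : memZ α (fun _ => (1:ℂ)) := by
    refine ⟨analyticOn_const, 0, fun z hz => ?_⟩
    simp [zygS]
  have hN₁ : zNorm α (fun _ => (1:ℂ)) ≤ 1 := by
    have h3 : sSup (zygS α (fun _ => (1:ℂ)) '' uD) ≤ 0 := by
      apply Real.sSup_le ?_ le_rfl
      rintro x ⟨z, hz, rfl⟩
      simp [zygS]
    unfold zNorm
    simp only [deriv_const', norm_zero, norm_one]
    linarith
  have hg'' : ∀ z ∈ uD, (1 - ‖z‖ ^ 2) ^ β * ‖deriv (deriv g) z‖ ≤ C := by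
    intro z hz
    have h := key _ hf₁ z hz
    unfold zygS at h
    rw [UgCphi_eq, T_deriv2 hφ hφm hg (differentiableOn_const (1:ℂ)) hz] at h
    simp only [deriv_const', zero_mul, one_mul, zero_add] at h
    calc (1 - ‖z‖ ^ 2) ^ β * ‖deriv (deriv g) z‖ ≤ C * zNorm α (fun _ => (1:ℂ)) := h
      _ ≤ C * 1 := mul_le_mul_of_nonneg_left hN₁ hC0.le
      _ = C := mul_one C
  -- Step 2 : identity function
  have hf₂ : memZ α (fun z : ℂ => z) := by
    constructor
    · exact (uD_open.analyticOn_iff_analyticOnNhd).2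
        (differentiableOn_id.analyticOnNhd uD_open)
    · refine ⟨0, fun z hz => ?_⟩
      simp [zygS]
  have hN₂ : zNorm α (fun z : ℂ => z) ≤ 1 := by
    have h3 : sSup (zygS α (fun z : ℂ => z) '' uD) ≤ 0 := by
      apply Real.sSup_le ?_ le_rfl
      rintro x ⟨z, hz, rfl⟩
      simp [zygS]
    unfold zNorm
    simp only [deriv_id'', norm_one, norm_zero]
    linarith
  have hgφ : ∀ z ∈ uD, (1 - ‖z‖ ^ 2) ^ β * ‖deriv g z * deriv φ z‖ ≤ 2*C := by
    intro z hz
    have h := key _ hf₂ z hz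
    unfold zygS at h
    rw [UgCphi_eq, T_deriv2 (f := fun z : ℂ => z) hφ hφm hg differentiableOn_id hz] at h
    simp only [deriv_id'', one_mul] at h
    have hzb : (0:ℝ) ≤ (1 - ‖z‖ ^ 2) ^ β := Real.rpow_nonneg (one_sub_sq_pos hz).le β
    have htri : ‖deriv φ z * deriv g z‖
        ≤ ‖deriv φ z * deriv g z + φ z * deriv (deriv g) z‖ + ‖φ z * deriv (deriv g) z‖ := by
      have h4 := norm_sub_le (deriv φ z * deriv g z + φ z * deriv (deriv g) z)
        (φ z * deriv (deriv g) z)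
      simpa using h4
    have hB : (1 - ‖z‖ ^ 2) ^ β * ‖φ z * deriv (deriv g) z‖ ≤ C := by
      rw [norm_mul]
      calc (1 - ‖z‖ ^ 2) ^ β * (‖φ z‖ * ‖deriv (deriv g) z‖)
          = ‖φ z‖ * ((1 - ‖z‖ ^ 2) ^ β * ‖deriv (deriv g) z‖) := by ring
        _ ≤ 1 * C := mul_le_mul (mem_uD.1 (hφm hz)).le (hg'' z hz)
            (mul_nonneg hzb (norm_nonneg _)) zero_le_one
        _ = C := one_mul C
    have hC1 : C * zNorm α (fun z : ℂ => z) ≤ C :=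
      (mul_le_mul_of_nonneg_left hN₂ hC0.le).trans (le_of_eq (mul_one C))
    calc (1 - ‖z‖ ^ 2) ^ β * ‖deriv g z * deriv φ z‖
        = (1 - ‖z‖ ^ 2) ^ β * ‖deriv φ z * deriv g z‖ := by rw [mul_comm (deriv g z)]
      _ ≤ (1 - ‖z‖ ^ 2) ^ β * (‖deriv φ z * deriv g z + φ z * deriv (deriv g) z‖
            + ‖φ z * deriv (deriv g) z‖) := mul_le_mul_of_nonneg_left htri hzb
      _ = (1 - ‖z‖ ^ 2) ^ β * ‖deriv φ z * deriv g z + φ z * deriv (deriv g) z‖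
            + (1 - ‖z‖ ^ 2) ^ β * ‖φ z * deriv (deriv g) z‖ := by ring
      _ ≤ C + C := add_le_add (h.trans hC1) hB
      _ = 2*C := by ring
  refine ⟨⟨C, hg''⟩, ?_⟩
  -- Step 3 : test functions
  set Kc : ℝ := 1 + (2-α) + (2-α)*(α-1)*2^α with hKc
  have hα2' : (0:ℝ) < 2 - α := by linarith
  set A₁ : ℝ := (2*C)/(3/4) with hA₁
  set A₂ : ℝ := 2*(C*Kc + C)/(2-α) with hA₂
  have hKc0 : 0 ≤ Kc := by
    rw [hKc]
    have h2α : (0:ℝ) < 2^α := Real.rpow_pos_of_pos (by norm_num) α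
    nlinarith [mul_nonneg (mul_nonneg hα2'.le (by linarith : (0:ℝ) ≤ α - 1)) h2α.le]
  have hA₁0 : 0 ≤ A₁ := by rw [hA₁]; positivity
  have hA₂0 : 0 ≤ A₂ := by
    rw [hA₂]
    have : 0 ≤ C*Kc + C := by nlinarith
    positivity
  refine ⟨A₁ + A₂, ?_⟩
  intro lam hlam
  have hwuD : φ lam ∈ uD := hφm hlam
  set ρ : ℝ := ‖φ lam‖ with hρ
  have hρ0 : 0 ≤ ρ := norm_nonneg _
  have hρ1 : ρ < 1 := mem_uD.1 hwuD
  have hDpos : (0:ℝ) < (1 - ρ^2) ^ (α-1) :=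
    Real.rpow_pos_of_pos (one_sub_sq_pos hwuD) _
  set X : ℝ := (1 - ‖lam‖ ^ 2) ^ β * ‖deriv g lam * deriv φ lam‖ with hX
  have hX0 : 0 ≤ X := mul_nonneg (Real.rpow_nonneg (one_sub_sq_pos hlam).le β) (norm_nonneg _)
  have hX2C : X ≤ 2*C := hgφ lam hlam
  rcases le_or_gt ρ (1/2 : ℝ) with hcase | hcase
  · -- small ρ
    have hD34 : (3/4 : ℝ) ≤ (1 - ρ^2) ^ (α-1) := by
      have h1 : (3/4 : ℝ) ≤ 1 - ρ^2 := by nlinarith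
      calc (3/4:ℝ) = (3/4:ℝ)^(1:ℝ) := (Real.rpow_one _).symm
        _ ≤ (3/4:ℝ)^(α-1) := Real.rpow_le_rpow_of_exponent_ge (by norm_num) (by norm_num)
            (by linarith)
        _ ≤ (1-ρ^2)^(α-1) := Real.rpow_le_rpow (by norm_num) h1 (by linarith)
    calc X / (1 - ρ^2) ^ (α-1) ≤ (2*C) / (3/4 : ℝ) :=
          div_le_div₀ (by positivity) hX2C (by norm_num) hD34
      _ = A₁ := by rw [hA₁]
      _ ≤ A₁ + A₂ := by linarith
  · -- large ρ
    have hw1 : ‖φ lam‖ ≤ 1 := hρ1.le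
    have hfw := testF_memZ (w := φ lam) hα1 hα2 hw1
    have hfd : DifferentiableOn ℂ (testF α (φ lam)) uD :=
      ((uD_open.analyticOn_iff_analyticOnNhd).1 hfw.1).differentiableOn
    have h := key _ hfw lam hlam
    have h' : zygS β (UgCphi g φ (testF α (φ lam))) lam ≤ C * Kc :=
      h.trans (mul_le_mul_of_nonneg_left (testF_zNorm_le hα1 hα2 hw1) hC0.le)
    unfold zygS at h'
    rw [UgCphi_eq, T_deriv2 hφ hφm hg hfd hlam] at h'
    have hzb : (0:ℝ) ≤ (1 - ‖lam‖ ^ 2) ^ β :=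
      Real.rpow_nonneg (one_sub_sq_pos hlam).le β
    have htri : ‖deriv (testF α (φ lam)) (φ lam) * deriv φ lam * deriv g lam‖
        ≤ ‖deriv (testF α (φ lam)) (φ lam) * deriv φ lam * deriv g lam
            + testF α (φ lam) (φ lam) * deriv (deriv g) lam‖
          + ‖testF α (φ lam) (φ lam) * deriv (deriv g) lam‖ := by
      have h4 := norm_sub_le (deriv (testF α (φ lam)) (φ lam) * deriv φ lam * deriv g lam
        + testF α (φ lam) (φ lam) * deriv (deriv g) lam) (testF α (φ lam) (φ lam) * deriv (deriv g) lam)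
      simpa using h4
    have hB : (1 - ‖lam‖ ^ 2) ^ β * ‖testF α (φ lam) (φ lam) * deriv (deriv g) lam‖ ≤ C := by
      rw [norm_mul]
      calc (1 - ‖lam‖ ^ 2) ^ β * (‖testF α (φ lam) (φ lam)‖ * ‖deriv (deriv g) lam‖)
          = ‖testF α (φ lam) (φ lam)‖ * ((1 - ‖lam‖ ^ 2) ^ β * ‖deriv (deriv g) lam‖) := by ring
        _ ≤ 1 * C := mul_le_mul (testF_at_self_norm hα2.le hwuD) (hg'' lam hlam)
            (mul_nonneg hzb (norm_nonneg _)) zero_le_one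
        _ = C := one_mul C
    have hmain : (1 - ‖lam‖ ^ 2) ^ β
        * ‖deriv (testF α (φ lam)) (φ lam) * deriv φ lam * deriv g lam‖ ≤ C * Kc + C := by
      calc (1 - ‖lam‖ ^ 2) ^ β * ‖deriv (testF α (φ lam)) (φ lam) * deriv φ lam * deriv g lam‖
          ≤ (1 - ‖lam‖ ^ 2) ^ β * (‖deriv (testF α (φ lam)) (φ lam) * deriv φ lam * deriv g lam
              + testF α (φ lam) (φ lam) * deriv (deriv g) lam‖
            + ‖testF α (φ lam) (φ lam) * deriv (deriv g) lam‖) :=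
            mul_le_mul_of_nonneg_left htri hzb
        _ = (1 - ‖lam‖ ^ 2) ^ β * ‖deriv (testF α (φ lam)) (φ lam) * deriv φ lam * deriv g lam
              + testF α (φ lam) (φ lam) * deriv (deriv g) lam‖
            + (1 - ‖lam‖ ^ 2) ^ β * ‖testF α (φ lam) (φ lam) * deriv (deriv g) lam‖ := by ring
        _ ≤ C * Kc + C := add_le_add h' hB
    have hAeq : (1 - ‖lam‖ ^ 2) ^ β
        * ‖deriv (testF α (φ lam)) (φ lam) * deriv φ lam * deriv g lam‖
        = (2-α) * ρ * ((1-ρ^2)^(1-α)) * X := by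
      rw [norm_mul, norm_mul, testF_deriv_at_self hα1 hα2 hwuD, hX, norm_mul]
      ring
    rw [hAeq] at hmain
    have hY : X * (1-ρ^2)^(1-α) ≤ A₂ := by
      rw [hA₂, le_div_iff₀ hα2']
      have hy0 : 0 ≤ X * (1-ρ^2)^(1-α) :=
        mul_nonneg hX0 (Real.rpow_nonneg (one_sub_sq_pos hwuD).le _)
      nlinarith [hmain, hy0, hcase, mul_nonneg (by linarith : (0:ℝ) ≤ ρ - 1/2) (mul_nonneg hα2'.le hy0)]
    have hgoal : X / (1 - ρ^2) ^ (α-1) = X * (1-ρ^2)^(1-α) := by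
      rw [div_eq_mul_inv, ← Real.rpow_neg (one_sub_sq_pos hwuD).le,
        show -(α-1) = 1-α by ring]
    rw [hgoal]
    linarith

end Forward

theorem stmt_13 (α β : ℝ) (hα1 : 1 < α) (hα2 : α < 2) (hβ : 0 < β)
    (φ g : ℂ → ℂ) (hφ : AnalyticOn ℂ φ uD) (hφm : Set.MapsTo φ uD uD)
    (hg : AnalyticOn ℂ g uD) :
    boundedOp α β (UgCphi g φ) ↔
      (memHv β (deriv (deriv g)) ∧ (∃ M : ℝ, ∀ z ∈ uD, (1 - ‖z‖ ^ 2) ^ β * ‖deriv g z * deriv φ z‖ / (1 - ‖φ z‖ ^ 2) ^ (α - 1) ≤ M)) := by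
  have hφd : DifferentiableOn ℂ φ uD :=
    ((uD_open.analyticOn_iff_analyticOnNhd).1 hφ).differentiableOn
  have hgd : DifferentiableOn ℂ g uD :=
    ((uD_open.analyticOn_iff_analyticOnNhd).1 hg).differentiableOn
  constructor
  · intro hb
    exact forward hα1 hα2 hβ hφd hφm hgd hb
  · rintro ⟨⟨M₁, hM₁⟩, M₂, hM₂⟩
    apply backward hα1 hα2 hβ hφd hφm hgd (M₁ := max M₁ 0) (M₂ := max M₂ 0)
      (le_max_right _ _) (le_max_right _ _)
    · intro z hz
      exact (hM₁ z hz).trans (le_max_left _ _)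
    · intro z hz
      have h := (hM₂ z hz).trans (le_max_left M₂ 0)
      rw [div_le_iff₀ (Real.rpow_pos_of_pos (one_sub_sq_pos (hφm hz)) _)] at h
      exact h
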